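/- For every integer d ≥ 3 and every integer 0 ≤ i ≤ d-2 there is a constant c > 0 such that for every pair of positive integers m, n with n^{1/2} ≤ m ≤ n^2, there exist a set S_i of m distinct i-flats in R^d and a set S_{i+1} of n distinct (i+1)-flats in R^d such that the number of containment pairs (f, g) ∈ S_i × S_{i+1} with f ⊆ g is at least c · m^{2/3} n^{2/3}. -/

import Mathlib

open scoped Classical
noncomputable section

/-- An `i`-flat in `ℝ^d`: a nonempty affine subspace of dimension `i`. -/
def IsFlat (d i : ℕ) (f : AffineSubspace ℝ (Fin d → ℝ)) : Prop :=
  (f : Set (Fin d → ℝ)).Nonempty ∧ Module.finrank ℝ f.direction = i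

namespace LiftedElekes

variable (d i : ℕ)

/-- Extension by zero into the first `i` coordinates. -/
def LF : (Fin i → ℝ) →ₗ[ℝ] (Fin d → ℝ) where
  toFun v := fun j => if h : (j : ℕ) < i then v ⟨j, h⟩ else 0
  map_add' u v := by funext j; by_cases h : (j : ℕ) < i <;> simp [h]
  map_smul' c v := by funext j; by_cases h : (j : ℕ) < i <;> simp [h]

lemma LF_apply (v : Fin i → ℝ) (j : Fin d) :
    LF d i v j = if h : (j : ℕ) < i then v ⟨j, h⟩ else 0 := rfl

/-- Direction map of a "line of slope `s`" lift. -/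
def LG (s : ℝ) : (Fin (i+1) → ℝ) →ₗ[ℝ] (Fin d → ℝ) where
  toFun v := fun j => if h : (j : ℕ) < i + 1 then v ⟨j, h⟩
    else if (j : ℕ) = i + 1 then s * v ⟨i, Nat.lt_succ_self i⟩ else 0
  map_add' u v := by
    funext j
    by_cases h : (j : ℕ) < i + 1 <;> by_cases h2 : (j : ℕ) = i + 1 <;>
      simp only [h, h2, dite_true, dite_false, ite_true, ite_false, Pi.add_apply,
        Pi.smul_apply, smul_eq_mul, dif_pos, dif_neg, if_pos, if_neg, not_false_eq_true, lt_self_iff_false, RingHom.id_apply] <;> ring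
  map_smul' c v := by
    funext j
    by_cases h : (j : ℕ) < i + 1 <;> by_cases h2 : (j : ℕ) = i + 1 <;>
      simp only [h, h2, dite_true, dite_false, ite_true, ite_false, Pi.add_apply,
        Pi.smul_apply, smul_eq_mul, dif_pos, dif_neg, if_pos, if_neg, not_false_eq_true, lt_self_iff_false, RingHom.id_apply] <;> ring

lemma LG_apply (s : ℝ) (v : Fin (i+1) → ℝ) (j : Fin d) :
    LG d i s v j = if h : (j : ℕ) < i + 1 then v ⟨j, h⟩
      else if (j : ℕ) = i + 1 then s * v ⟨i, Nat.lt_succ_self i⟩ else 0 := rfl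

/-- The base point with coordinate `i` equal to `a`, coordinate `i+1` equal to `b`. -/
def pF (a b : ℝ) : Fin d → ℝ :=
  fun j => if (j : ℕ) = i then a else if (j : ℕ) = i + 1 then b else 0

/-- The `i`-flat corresponding to the planar point `(a, b)`. -/
def F (a b : ℝ) : AffineSubspace ℝ (Fin d → ℝ) :=
  AffineSubspace.mk' (pF d i a b) (LinearMap.range (LF d i))

/-- The `(i+1)`-flat corresponding to the planar line `y = s x + t`. -/
def G (s t : ℝ) : AffineSubspace ℝ (Fin d → ℝ) :=
  AffineSubspace.mk' (pF d i 0 t) (LinearMap.range (LG d i s))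

lemma LF_inj (h : i ≤ d) : Function.Injective (LF d i) := by
  intro u v huv
  funext k
  have hk : (k : ℕ) < d := lt_of_lt_of_le k.2 h
  have := congrFun huv ⟨k, hk⟩
  simpa [LF_apply, k.2] using this

lemma LG_inj (s : ℝ) (h : i + 1 ≤ d) : Function.Injective (LG d i s) := by
  intro u v huv
  funext k
  have hk : (k : ℕ) < d := lt_of_lt_of_le k.2 h
  have := congrFun huv ⟨k, hk⟩
  simpa [LG_apply, k.2] using this

lemma isFlat_F (hi : i + 2 ≤ d) (a b : ℝ) : IsFlat d i (F d i a b) := by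
  constructor
  · exact ⟨pF d i a b, AffineSubspace.self_mem_mk' _ _⟩
  · rw [F, AffineSubspace.direction_mk',
      LinearMap.finrank_range_of_inj (LF_inj d i (by omega))]
    exact Module.finrank_fin_fun ℝ

lemma isFlat_G (hi : i + 2 ≤ d) (s t : ℝ) : IsFlat d (i+1) (G d i s t) := by
  constructor
  · exact ⟨pF d i 0 t, AffineSubspace.self_mem_mk' _ _⟩
  · rw [G, AffineSubspace.direction_mk',
      LinearMap.finrank_range_of_inj (LG_inj d i s (by omega))]
    exact Module.finrank_fin_fun ℝ

lemma F_le_G (hi : i + 2 ≤ d) {a b s t : ℝ} (hline : b = s * a + t) :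
    F d i a b ≤ G d i s t := by
  rw [SetLike.le_def]
  intro x hx
  rw [F, AffineSubspace.mem_mk'] at hx
  rw [G, AffineSubspace.mem_mk']
  obtain ⟨v, hv⟩ := hx
  refine ⟨fun k => if h2 : (k : ℕ) < i then v ⟨k, h2⟩ else a, ?_⟩
  funext j
  have hj := congrFun hv j
  simp only [vsub_eq_sub, Pi.sub_apply] at hj ⊢
  rw [LG_apply]
  rcases lt_trichotomy ((j : ℕ)) i with h1 | h1 | h1
  · have h1' : (j : ℕ) < i + 1 := by omega
    rw [dif_pos h1']
    rw [LF_apply, dif_pos h1] at hj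
    simp only [pF, if_neg (by omega : ¬ (j:ℕ) = i), if_neg (by omega : ¬ (j:ℕ) = i+1)] at hj ⊢
    simp only [dif_pos h1]
    linarith [hj]
  · have h1' : (j : ℕ) < i + 1 := by omega
    rw [dif_pos h1']
    rw [LF_apply, dif_neg (by omega)] at hj
    simp only [pF, if_pos h1, if_neg (by omega : ¬ (0:ℕ) + i = i + 1)] at hj ⊢
    simp only [dif_neg (by omega : ¬ (j:ℕ) < i)]
    have : x j = a := by
      have := hj
      linarith [this]
    simp [pF, h1]
    linarith [this]
  · by_cases h2 : (j : ℕ) = i + 1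
    · rw [dif_neg (by omega), if_pos h2]
      rw [LF_apply, dif_neg (by omega)] at hj
      simp only [pF, if_neg (by omega : ¬ (j:ℕ) = i), if_pos h2] at hj
      have hxj : x j = b := by linarith [hj]
      rw [dif_neg (by omega : ¬ i < i)]
      simp only [pF, if_neg (by omega : ¬ (j:ℕ) = i), if_pos h2]
      rw [hxj, hline]
      ring
    · rw [dif_neg (by omega), if_neg h2]
      rw [LF_apply, dif_neg (by omega)] at hj
      simp only [pF, if_neg (by omega : ¬ (j:ℕ) = i), if_neg h2] at hj ⊢
      linarith [hj]

lemma F_inj (hi : i + 2 ≤ d) {a b a' b' : ℝ} (h : F d i a b = F d i a' b') :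
    a = a' ∧ b = b' := by
  have hm : pF d i a b ∈ F d i a' b' := h ▸ AffineSubspace.self_mem_mk' _ _
  rw [F, AffineSubspace.mem_mk'] at hm
  obtain ⟨v, hv⟩ := hm
  have h1 := congrFun hv ⟨i, by omega⟩
  have h2 := congrFun hv ⟨i+1, by omega⟩
  rw [LF_apply, dif_neg (by simp)] at h1
  rw [LF_apply, dif_neg (by simp)] at h2
  simp only [vsub_eq_sub, Pi.sub_apply, pF] at h1 h2
  simp at h1 h2
  constructor <;> linarith

lemma G_mem_one (s t : ℝ) (hi : i + 2 ≤ d) : pF d i 1 (s + t) ∈ G d i s t := by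
  rw [G, AffineSubspace.mem_mk']
  refine ⟨fun k => if (k : ℕ) = i then 1 else 0, ?_⟩
  funext j
  simp only [vsub_eq_sub, Pi.sub_apply]
  rw [LG_apply]
  rcases lt_trichotomy ((j : ℕ)) i with h1 | h1 | h1
  · rw [dif_pos (by omega)]
    simp [pF, if_neg (by omega : ¬ (j:ℕ) = i), if_neg (by omega : ¬ (j:ℕ) = i+1), h1]
  · rw [dif_pos (by omega)]
    simp [pF, h1]
  · by_cases h2 : (j : ℕ) = i + 1
    · rw [dif_neg (by omega), if_pos h2]
      simp [pF, if_neg (by omega : ¬ (j:ℕ) = i), h2]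
    · rw [dif_neg (by omega), if_neg h2]
      simp [pF, if_neg (by omega : ¬ (j:ℕ) = i), h2]

lemma G_inj (hi : i + 2 ≤ d) {s t s' t' : ℝ} (h : G d i s t = G d i s' t') :
    s = s' ∧ t = t' := by
  have hm : pF d i 0 t ∈ G d i s' t' := h ▸ AffineSubspace.self_mem_mk' _ _
  rw [G, AffineSubspace.mem_mk'] at hm
  obtain ⟨v, hv⟩ := hm
  have hbt := congrFun hv ⟨i+1, by omega⟩
  have hbi := congrFun hv ⟨i, by omega⟩
  rw [LG_apply, dif_neg (by simp), if_pos (by simp)] at hbt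
  rw [LG_apply, dif_pos (by simp [Nat.lt_succ_self])] at hbi
  simp only [vsub_eq_sub, Pi.sub_apply, pF] at hbt hbi
  simp at hbt hbi
  -- hbi : v ⟨i, _⟩ = 0, hbt : s' * v ⟨i,_⟩ = t - t'
  have ht : t = t' := by rw [hbi] at hbt; linarith [hbt]
  refine ⟨?_, ht⟩
  have hq : pF d i 1 (s + t) ∈ G d i s' t' := h ▸ G_mem_one d i s t hi
  rw [G, AffineSubspace.mem_mk'] at hq
  obtain ⟨w, hw⟩ := hq
  have hq1 := congrFun hw ⟨i, by omega⟩
  have hq2 := congrFun hw ⟨i+1, by omega⟩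
  rw [LG_apply, dif_pos (by simp [Nat.lt_succ_self])] at hq1
  rw [LG_apply, dif_neg (by simp), if_pos (by simp)] at hq2
  simp only [vsub_eq_sub, Pi.sub_apply, pF] at hq1 hq2
  simp at hq1 hq2
  -- hq1 : w ⟨i,_⟩ = 1, hq2 : s' * w ⟨i,_⟩ = s + t - t'
  rw [hq1] at hq2
  rw [ht] at hq2
  linarith [hq2]


/-- Natural-number versions of the flats. -/
def Fn (p : ℕ × ℕ) : AffineSubspace ℝ (Fin d → ℝ) := F d i (p.1 : ℝ) (p.2 : ℝ)

def Gn (l : ℕ × ℕ) : AffineSubspace ℝ (Fin d → ℝ) := G d i (l.1 : ℝ) (l.2 : ℝ)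

lemma Fn_inj (hi : i + 2 ≤ d) : Function.Injective (Fn d i) := by
  intro p p' h
  obtain ⟨h1, h2⟩ := F_inj d i hi h
  exact Prod.ext (by exact_mod_cast h1) (by exact_mod_cast h2)

lemma Gn_inj (hi : i + 2 ≤ d) : Function.Injective (Gn d i) := by
  intro p p' h
  obtain ⟨h1, h2⟩ := G_inj d i hi h
  exact Prod.ext (by exact_mod_cast h1) (by exact_mod_cast h2)

/-- Main construction lemma reducing everything to a count of integer incidences. -/
lemma main_construct (hi : i + 2 ≤ d) (P L : Finset (ℕ × ℕ)) (K : ℕ)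
    (hK : K ≤ ((P ×ˢ L).filter
      (fun q : (ℕ × ℕ) × (ℕ × ℕ) => q.1.2 = q.2.1 * q.1.1 + q.2.2)).card) :
    ∃ A B : Finset (AffineSubspace ℝ (Fin d → ℝ)),
      A.card = P.card ∧ B.card = L.card ∧ (∀ f ∈ A, IsFlat d i f) ∧
      (∀ g ∈ B, IsFlat d (i + 1) g) ∧
      (K : ℝ) ≤ (Set.ncard {q : AffineSubspace ℝ (Fin d → ℝ) × AffineSubspace ℝ (Fin d → ℝ) |
          q.1 ∈ A ∧ q.2 ∈ B ∧ q.1 ≤ q.2} : ℝ) := by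
  refine ⟨P.image (Fn d i), L.image (Gn d i),
    Finset.card_image_of_injective _ (Fn_inj d i hi),
    Finset.card_image_of_injective _ (Gn_inj d i hi), ?_, ?_, ?_⟩
  · intro f hf
    obtain ⟨p, _, rfl⟩ := Finset.mem_image.mp hf
    exact isFlat_F d i hi _ _
  · intro g hg
    obtain ⟨l, _, rfl⟩ := Finset.mem_image.mp hg
    exact isFlat_G d i hi _ _
  · set A := P.image (Fn d i)
    set B := L.image (Gn d i)
    set T := (A ×ˢ B).filter (fun q => q.1 ≤ q.2) with hT
    have hset : {q : AffineSubspace ℝ (Fin d → ℝ) × AffineSubspace ℝ (Fin d → ℝ) |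
        q.1 ∈ A ∧ q.2 ∈ B ∧ q.1 ≤ q.2} = (T : Set _) := by
      ext q
      simp [hT, Finset.mem_filter, Finset.mem_product, and_assoc]
    rw [hset, Set.ncard_coe_finset]
    have hcard : ((P ×ˢ L).filter
        (fun q : (ℕ × ℕ) × (ℕ × ℕ) => q.1.2 = q.2.1 * q.1.1 + q.2.2)).card ≤ T.card := by
      apply Finset.card_le_card_of_injOn (fun q => (Fn d i q.1, Gn d i q.2))
      · intro q hq
        rw [Finset.mem_coe, Finset.mem_filter, Finset.mem_product] at hq
        obtain ⟨⟨hq1, hq2⟩, hq3⟩ := hq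
        rw [Finset.mem_coe, hT, Finset.mem_filter, Finset.mem_product]
        refine ⟨⟨Finset.mem_image_of_mem _ hq1, Finset.mem_image_of_mem _ hq2⟩, ?_⟩
        apply F_le_G d i hi
        exact_mod_cast congrArg (fun k : ℕ => (k : ℝ)) hq3
      · intro q _ q' _ h
        rw [Prod.ext_iff] at h
        exact Prod.ext (Fn_inj d i hi h.1) (Gn_inj d i hi h.2)
    exact_mod_cast le_trans hK hcard

end LiftedElekes

set_option maxHeartbeats 2000000 in
open LiftedElekes in
/-- For every `d ≥ 3` and `0 ≤ i ≤ d-2` there is `c > 0` such that for all `m, n` with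
`n^{1/2} ≤ m ≤ n^2` there are `m` distinct `i`-flats and `n` distinct `(i+1)`-flats in
`ℝ^d` with at least `c · m^{2/3} n^{2/3}` containment pairs. -/
theorem lifted_elekes_lower_bound (d i : ℕ) (hd : 3 ≤ d) (hi : i + 2 ≤ d) :
    ∃ c : ℝ, 0 < c ∧
      ∀ m n : ℕ, 0 < m → 0 < n → Real.sqrt n ≤ (m : ℝ) → m ≤ n ^ 2 →
        ∃ A B : Finset (AffineSubspace ℝ (Fin d → ℝ)),
          A.card = m ∧ B.card = n ∧
          (∀ f ∈ A, IsFlat d i f) ∧ (∀ g ∈ B, IsFlat d (i + 1) g) ∧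
          c * (m : ℝ) ^ ((2:ℝ)/3) * (n : ℝ) ^ ((2:ℝ)/3) ≤
            (Set.ncard {q : AffineSubspace ℝ (Fin d → ℝ) × AffineSubspace ℝ (Fin d → ℝ) |
                q.1 ∈ A ∧ q.2 ∈ B ∧ q.1 ≤ q.2} : ℝ) := by
  refine ⟨1/64, by norm_num, ?_⟩
  intro m n hm hn hsq hmn
  have hM0 : (1:ℝ) ≤ (m:ℝ) := by exact_mod_cast hm
  have hN0 : (1:ℝ) ≤ (n:ℝ) := by exact_mod_cast hn
  have hMpos : (0:ℝ) < m := by linarith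
  have hNpos : (0:ℝ) < n := by linarith
  obtain ⟨a, hadef⟩ : ∃ a : ℝ, a = (m:ℝ) ^ ((1:ℝ)/3) := ⟨_, rfl⟩
  obtain ⟨b, hbdef⟩ : ∃ b : ℝ, b = (n:ℝ) ^ ((1:ℝ)/3) := ⟨_, rfl⟩
  have ha : 0 < a := hadef ▸ Real.rpow_pos_of_pos hMpos _
  have hb : 0 < b := hbdef ▸ Real.rpow_pos_of_pos hNpos _
  have ha3 : a ^ 3 = (m:ℝ) := by
    rw [hadef, ← Real.rpow_natCast ((m:ℝ) ^ ((1:ℝ)/3)) 3, ← Real.rpow_mul hMpos.le]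
    norm_num
  have hb3 : b ^ 3 = (n:ℝ) := by
    rw [hbdef, ← Real.rpow_natCast ((n:ℝ) ^ ((1:ℝ)/3)) 3, ← Real.rpow_mul hNpos.le]
    norm_num
  have hM23 : (m:ℝ) ^ ((2:ℝ)/3) = a ^ 2 := by
    rw [hadef, ← Real.rpow_natCast ((m:ℝ) ^ ((1:ℝ)/3)) 2, ← Real.rpow_mul hMpos.le]
    norm_num
  have hN23 : (n:ℝ) ^ ((2:ℝ)/3) = b ^ 2 := by
    rw [hbdef, ← Real.rpow_natCast ((n:ℝ) ^ ((1:ℝ)/3)) 2, ← Real.rpow_mul hNpos.le]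
    norm_num
  rw [hM23, hN23]
  have hNM2 : (n:ℝ) ≤ (m:ℝ) ^ 2 := by
    nlinarith [Real.sq_sqrt hNpos.le, Real.sqrt_nonneg ((n:ℝ)), hsq]
  have hba2 : b ≤ a ^ 2 := by
    have h3 : b ^ 3 ≤ (a ^ 2) ^ 3 := by rw [hb3]; nlinarith [ha3]
    exact (pow_le_pow_iff_left₀ hb.le (by positivity) (by norm_num)).mp h3
  by_cases hcase : 8 * (m:ℝ) ≤ (n:ℝ) ^ 2
  · -- main grid construction
    have h2ab : 2 * a ≤ b ^ 2 := by
      have h3 : (2 * a) ^ 3 ≤ (b ^ 2) ^ 3 := by nlinarith [ha3, hb3]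
      exact (pow_le_pow_iff_left₀ (by positivity) (by positivity) (by norm_num)).mp h3
    obtain ⟨x, hxdef⟩ : ∃ x : ℝ, x = a ^ 2 / b := ⟨_, rfl⟩
    obtain ⟨y, hydef⟩ : ∃ y : ℝ, y = b ^ 2 / (2 * a) := ⟨_, rfl⟩
    have hxpos : 0 < x := by rw [hxdef]; positivity
    have hypos : 0 < y := by rw [hydef]; positivity
    have hx1 : 1 ≤ x := by rw [hxdef, le_div_iff₀ hb]; linarith
    have hy1 : 1 ≤ y := by rw [hydef, le_div_iff₀ (by positivity)]; linarith
    obtain ⟨r, hr1, hrx, hxr⟩ : ∃ r : ℕ, 1 ≤ r ∧ (r:ℝ) ≤ x ∧ x ≤ 2 * r := by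
      refine ⟨⌊x⌋₊, Nat.le_floor (by exact_mod_cast hx1), Nat.floor_le hxpos.le, ?_⟩
      have h := Nat.lt_floor_add_one x
      have h2 : (1:ℝ) ≤ (⌊x⌋₊ : ℝ) := by
        exact_mod_cast Nat.le_floor (α := ℝ) (by exact_mod_cast hx1)
      linarith
    obtain ⟨s, hs1, hsy, hys⟩ : ∃ s : ℕ, 1 ≤ s ∧ (s:ℝ) ≤ y ∧ y ≤ 2 * s := by
      refine ⟨⌊y⌋₊, Nat.le_floor (by exact_mod_cast hy1), Nat.floor_le hypos.le, ?_⟩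
      have h := Nat.lt_floor_add_one y
      have h2 : (1:ℝ) ≤ (⌊y⌋₊ : ℝ) := by
        exact_mod_cast Nat.le_floor (α := ℝ) (by exact_mod_cast hy1)
      linarith
    have hxyM : 2 * x ^ 2 * y = (m:ℝ) := by
      rw [hxdef, hydef, ← ha3]; field_simp
    have hxyN : x * y ^ 2 = (n:ℝ) / 4 := by
      rw [hxdef, hydef, ← hb3]; field_simp; ring
    have hgrid_m : 2 * r ^ 2 * s ≤ m := by
      have h1 : (r:ℝ)^2 ≤ x^2 := pow_le_pow_left₀ (by positivity) hrx 2
      have h2 : (r:ℝ)^2 * s ≤ x^2 * y := mul_le_mul h1 hsy (by positivity) (by positivity)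
      have hreal : 2 * (r:ℝ) ^ 2 * (s:ℝ) ≤ (m:ℝ) := by linarith
      exact_mod_cast hreal
    have hgrid_n : r * s ^ 2 ≤ n := by
      have h1 : (s:ℝ)^2 ≤ y^2 := pow_le_pow_left₀ (by positivity) hsy 2
      have h2 : (r:ℝ) * (s:ℝ)^2 ≤ x * y^2 := mul_le_mul hrx h1 (by positivity) (by positivity)
      have hreal : (r:ℝ) * (s:ℝ) ^ 2 ≤ (n:ℝ) := by linarith
      exact_mod_cast hreal
    -- the point and line sets
    obtain ⟨P, hPdef⟩ : ∃ P : Finset (ℕ × ℕ), P =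
      (Finset.range r ×ˢ Finset.range (2*r*s)) ∪
        (Finset.range (m - 2*r^2*s)).image (fun k => (r + k, 0)) := ⟨_, rfl⟩
    obtain ⟨L, hLdef⟩ : ∃ L : Finset (ℕ × ℕ), L =
      (Finset.range s ×ˢ Finset.range (r*s)) ∪
        (Finset.range (n - r*s^2)).image (fun k => (s + k, 0)) := ⟨_, rfl⟩
    have hPcard : P.card = m := by
      rw [hPdef, Finset.card_union_of_disjoint, Finset.card_product,
        Finset.card_image_of_injective, Finset.card_range, Finset.card_range,
        Finset.card_range]
      · have h1 : r*(2*r*s) = 2*r^2*s := by ring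
        omega
      · intro k k' h
        simpa using h
      · rw [Finset.disjoint_left]
        intro p hp hp2
        rw [Finset.mem_product, Finset.mem_range, Finset.mem_range] at hp
        obtain ⟨k, _, rfl⟩ := Finset.mem_image.mp hp2
        simp at hp
    have hLcard : L.card = n := by
      rw [hLdef, Finset.card_union_of_disjoint, Finset.card_product,
        Finset.card_image_of_injective, Finset.card_range, Finset.card_range,
        Finset.card_range]
      · have h1 : s*(r*s) = r*s^2 := by ring
        omega
      · intro k k' h
        simpa using h
      · rw [Finset.disjoint_left]
        intro p hp hp2
        rw [Finset.mem_product, Finset.mem_range, Finset.mem_range] at hp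
        obtain ⟨k, _, rfl⟩ := Finset.mem_image.mp hp2
        simp at hp
    have hK : r*(s*(r*s)) ≤ ((P ×ˢ L).filter
        (fun q : (ℕ × ℕ) × (ℕ × ℕ) => q.1.2 = q.2.1 * q.1.1 + q.2.2)).card := by
      have hJ : (Finset.range r ×ˢ (Finset.range s ×ˢ Finset.range (r*s))).card
          = r*(s*(r*s)) := by
        simp [Finset.card_product]
      rw [← hJ]
      apply Finset.card_le_card_of_injOn
        (fun q : ℕ × ℕ × ℕ => ((q.1, q.2.1*q.1+q.2.2), (q.2.1, q.2.2)))
      · intro q hq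
        rw [Finset.mem_coe, Finset.mem_product, Finset.mem_product, Finset.mem_range, Finset.mem_range,
          Finset.mem_range] at hq
        obtain ⟨h1, h2, h3⟩ := hq
        rw [Finset.mem_coe, Finset.mem_filter, Finset.mem_product]
        refine ⟨⟨?_, ?_⟩, rfl⟩
        · rw [hPdef]
          apply Finset.mem_union_left
          rw [Finset.mem_product, Finset.mem_range, Finset.mem_range]
          refine ⟨h1, ?_⟩
          have hmul : (q.2.1+1)*(q.1+1) ≤ s*r := Nat.mul_le_mul h2 h1
          nlinarith [hmul, h3]
        · rw [hLdef]
          apply Finset.mem_union_left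
          rw [Finset.mem_product, Finset.mem_range, Finset.mem_range]
          exact ⟨h2, h3⟩
      · intro q _ q' _ h
        simp only [Prod.ext_iff] at h ⊢
        exact ⟨h.1.1, h.2.1, h.2.2⟩
    obtain ⟨A, B, hA, hB, hfA, hfB, hcount⟩ :=
      main_construct d i hi P L (r*(s*(r*s))) hK
    refine ⟨A, B, by rw [hA, hPcard], by rw [hB, hLcard], hfA, hfB, ?_⟩
    refine le_trans ?_ hcount
    have hcast : ((r*(s*(r*s)) : ℕ):ℝ) = (r:ℝ)^2*(s:ℝ)^2 := by push_cast; ring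
    rw [hcast]
    have habxy : a^2*b^2 = 4*(x^2*y^2) := by
      rw [hxdef, hydef]; field_simp; ring
    have hx2 : x^2 ≤ 4*(r:ℝ)^2 := by
      have h := pow_le_pow_left₀ hxpos.le hxr 2
      have h2 : (2*(r:ℝ))^2 = 4*(r:ℝ)^2 := by ring
      linarith
    have hy2 : y^2 ≤ 4*(s:ℝ)^2 := by
      have h := pow_le_pow_left₀ hypos.le hys 2
      have h2 : (2*(s:ℝ))^2 = 4*(s:ℝ)^2 := by ring
      linarith
    have hxy16 : x^2*y^2 ≤ 16*((r:ℝ)^2*(s:ℝ)^2) := by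
      have h := mul_le_mul hx2 hy2 (sq_nonneg y) (by positivity)
      have h2 : (4*(r:ℝ)^2)*(4*(s:ℝ)^2) = 16*((r:ℝ)^2*(s:ℝ)^2) := by ring
      linarith
    linarith
  · -- degenerate case: one (i+1)-flat containing m parallel i-flats
    push_neg at hcase
    obtain ⟨P, hPdef⟩ : ∃ P : Finset (ℕ × ℕ),
      P = (Finset.range m).image (fun k => (k, 0)) := ⟨_, rfl⟩
    obtain ⟨L, hLdef⟩ : ∃ L : Finset (ℕ × ℕ),
      L = (Finset.range n).image (fun k => (0, k)) := ⟨_, rfl⟩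
    have hPcard : P.card = m := by
      rw [hPdef, Finset.card_image_of_injective, Finset.card_range]
      intro k k' h
      simpa using h
    have hLcard : L.card = n := by
      rw [hLdef, Finset.card_image_of_injective, Finset.card_range]
      intro k k' h
      simpa using h
    have hK : m ≤ ((P ×ˢ L).filter
        (fun q : (ℕ × ℕ) × (ℕ × ℕ) => q.1.2 = q.2.1 * q.1.1 + q.2.2)).card := by
      have hJ : (Finset.range m).card = m := Finset.card_range m
      rw [← hJ]
      apply Finset.card_le_card_of_injOn (fun k : ℕ => ((k, 0), (0, 0)))
      · intro k hk
        rw [Finset.mem_coe, Finset.mem_filter, Finset.mem_product]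
        refine ⟨⟨?_, ?_⟩, by simp⟩
        · rw [hPdef]
          exact Finset.mem_image_of_mem _ hk
        · rw [hLdef]
          exact Finset.mem_image.mpr ⟨0, Finset.mem_range.mpr hn, rfl⟩
      · intro k _ k' _ h
        simp only [Prod.ext_iff] at h
        exact h.1.1
    obtain ⟨A, B, hA, hB, hfA, hfB, hcount⟩ := main_construct d i hi P L m hK
    refine ⟨A, B, by rw [hA, hPcard], by rw [hB, hLcard], hfA, hfB, ?_⟩
    refine le_trans ?_ hcount
    have hb2a : b^2 ≤ 2*a := by
      have h3 : (b^2) ^ 3 ≤ (2*a) ^ 3 := by nlinarith [ha3, hb3]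
      exact (pow_le_pow_iff_left₀ (by positivity) (by positivity) (by norm_num)).mp h3
    have hab : a^2*b^2 ≤ 2*(m:ℝ) := by
      have := mul_le_mul_of_nonneg_left hb2a (sq_nonneg a)
      nlinarith [ha3]
    linarith
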